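/- Let B be a C*-algebra, E a Hilbert B-module, and F a closed ternary subspace of E. Let B_F and B_E be the closed linear spans of {⟨f,f'⟩ : f, f' ∈ F} and {⟨x,y⟩ : x, y ∈ E} respectively. If B_F is hereditary in B_E in the sense that B_F · B_E · B_F ⊆ B_F, then F is ternary hereditary in E: f·⟨x,f'⟩ ∈ F for all f, f' ∈ F and x ∈ E. -/

import Mathlib

open scoped RightActions

/-- The closed linear span of a subset of a topological `ℂ`-module. -/
noncomputable def clSpan {M : Type*} [AddCommMonoid M] [Module ℂ M] [TopologicalSpace M]
    (S : Set M) : Set M :=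
  closure (Submodule.span ℂ S : Set M)

/-- A subset is a (complex) linear subspace. -/
def IsLinearSubspace {M : Type*} [AddCommMonoid M] [Module ℂ M] (K : Set M) : Prop :=
  (0 : M) ∈ K ∧ (∀ x ∈ K, ∀ y ∈ K, x + y ∈ K) ∧ ∀ (c : ℂ), ∀ x ∈ K, c • x ∈ K

/-- A closed two-sided ideal of a C*-algebra `B`. -/
structure IsClosedTwoSidedIdeal {B : Type*} [NonUnitalCStarAlgebra B] (I : Set B) : Prop where
  isClosed : IsClosed I
  subspace : IsLinearSubspace I
  mul_mem_left : ∀ (b : B), ∀ a ∈ I, b * a ∈ I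
  mul_mem_right : ∀ (b : B), ∀ a ∈ I, a * b ∈ I

/-- The December 2024 Mathlib `CStarModule` (right module: `SMul Aᵐᵒᵖ E`, inner product
linear on the right, `⟪x, y <• a⟫ = ⟪x, y⟫ * a`), whose name Mathlib now uses for a left module. -/
class CStarModuleRight (A E : Type*) [NonUnitalSemiring A] [StarRing A] [Module ℂ A]
    [AddCommGroup E] [Module ℂ E] [PartialOrder A] [SMul Aᵐᵒᵖ E] [Norm A] [Norm E]
    extends Inner A E where
  inner_add_right {x} {y} {z} : inner x (y + z) = inner x y + inner x z
  inner_self_nonneg {x} : 0 ≤ inner x x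
  inner_self {x} : inner x x = 0 ↔ x = 0
  inner_op_smul_right {a : A} {x y : E} : inner x (y <• a) = inner x y * a
  inner_smul_right_complex {z : ℂ} {x} {y} : inner x (z • y) = z • inner x y
  star_inner x y : star (inner x y) = inner y x
  norm_eq_sqrt_norm_inner_self x : ‖x‖ = √‖inner x x‖

section HilbertModule

variable (B : Type*) [NonUnitalCStarAlgebra B] [PartialOrder B] [StarOrderedRing B]
variable {E : Type*} [NormedAddCommGroup E] [NormedSpace ℂ E] [SMul Bᵐᵒᵖ E] [CStarModuleRight B E]

/-- `K ⊆ E` is an *ideal submodule* if it is the closed linear span of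
`{x <• i : x ∈ E, i ∈ I}` for some closed two-sided ideal `I` of `B`. -/
def IsIdealSubmodule (K : Set E) : Prop :=
  ∃ I : Set B, IsClosedTwoSidedIdeal I ∧
    K = clSpan {z : E | ∃ x : E, ∃ i ∈ I, z = x <• i}

/-- A *ternary ideal* of a Hilbert `B`-module `E`: a linear subspace `K` with
`x <• ⟪k, y⟫ ∈ K` for all `x y ∈ E` and `k ∈ K`. -/
def IsTernaryIdeal (K : Set E) : Prop :=
  IsLinearSubspace K ∧ ∀ (x y : E), ∀ k ∈ K, x <• (inner B k y : B) ∈ K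

/-- `B_S`: the closed linear span in `B` of all inner products of elements of `S`. -/
noncomputable def rangeIdeal (S : Set E) : Set B :=
  clSpan {b : B | ∃ k ∈ S, ∃ k' ∈ S, b = (inner B k k' : B)}

/-- The orthogonal complement of a subset of a Hilbert `B`-module. -/
def perp (S : Set E) : Set E :=
  {x : E | ∀ s ∈ S, (inner B x s : B) = 0}

end HilbertModule

attribute [simp] CStarModuleRight.inner_add_right CStarModuleRight.star_inner
attribute [simp] CStarModuleRight.inner_op_smul_right CStarModuleRight.inner_smul_right_complex

namespace CStarModuleRight

variable {A : Type*} [NonUnitalCStarAlgebra A] [PartialOrder A] [StarOrderedRing A]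
variable {E : Type*} [NormedAddCommGroup E] [NormedSpace ℂ E] [SMul Aᵐᵒᵖ E] [CStarModuleRight A E]

@[simp]
lemma inner_add_left {x y z : E} : inner A (x + y) z = inner A x z + inner A y z := by
  rw [← star_star (r := inner A (x + y) z)]
  simp only [inner_add_right, star_add, star_inner]

@[simp]
lemma inner_op_smul_left {a : A} {x y : E} : inner A (x <• a) y = star a * inner A x y := by
  rw [← star_inner (A := A)]; simp

@[simp]
lemma inner_smul_left_complex {z : ℂ} {x y : E} : inner A (z • x) y = star z • inner A x y := by
  rw [← star_inner (A := A)]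
  simp

@[simp]
lemma inner_smul_left_real {z : ℝ} {x y : E} : inner A (z • x) y = z • inner A x y := by
  have h₁ : z • x = (z : ℂ) • x := by simp
  rw [h₁, ← star_inner (A := A), inner_smul_right_complex]
  simp

@[simp]
lemma inner_smul_right_real {z : ℝ} {x y : E} : inner A x (z • y) = z • inner A x y := by
  have h₁ : z • y = (z : ℂ) • y := by simp
  rw [h₁, inner_smul_right_complex]
  simp

@[simp] lemma inner_zero_right {x : E} : inner A x 0 = 0 := by
  simpa using inner_smul_right_complex (A := A) (z := 0) (x := x) (y := 0)

@[simp] lemma inner_zero_left {x : E} : inner A 0 x = 0 := by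
  rw [← star_inner (A := A), inner_zero_right, star_zero]

@[simp] lemma inner_neg_right {x y : E} : inner A x (-y) = -inner A x y := by
  rw [← neg_one_smul ℂ y, inner_smul_right_complex, neg_one_smul]

@[simp] lemma inner_sub_right {x y z : E} : inner A x (y - z) = inner A x y - inner A x z := by
  rw [sub_eq_add_neg, inner_add_right, inner_neg_right, ← sub_eq_add_neg]

@[simp] lemma inner_sub_left {x y z : E} : inner A (x - y) z = inner A x z - inner A y z := by
  rw [← star_inner (A := A), inner_sub_right, star_sub, star_inner, star_inner]

lemma isSelfAdjoint_inner_self {x : E} : IsSelfAdjoint (inner A x x) := star_inner _ _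

lemma norm_sq_eq {x : E} : ‖x‖ ^ 2 = ‖inner A x x‖ := by
  rw [norm_eq_sqrt_norm_inner_self (A := A) x, Real.sq_sqrt (norm_nonneg _)]

lemma inner_mul_inner_swap_le {x y : E} :
    inner A y x * inner A x y ≤ ‖x‖ ^ 2 • inner A y y := by
  rcases eq_or_ne x 0 with h | h
  · simp [h]
  · have h₁ : ∀ (a : A),
        (0 : A) ≤ ‖x‖ ^ 2 • (star a * a) - ‖x‖ ^ 2 • (star a * inner A x y)
                  - ‖x‖ ^ 2 • (inner A y x * a) + ‖x‖ ^ 2 • (‖x‖ ^ 2 • inner A y y) := fun a => by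
      calc (0 : A) ≤ inner A (x <• a - ‖x‖ ^ 2 • y) (x <• a - ‖x‖ ^ 2 • y) := by exact inner_self_nonneg
            _ = star a * inner A x x * a - ‖x‖ ^ 2 • (star a * inner A x y)
                  - ‖x‖ ^ 2 • (inner A y x * a) + ‖x‖ ^ 2 • (‖x‖ ^ 2 • inner A y y) := by
                      simp only [inner_sub_right, inner_op_smul_right, inner_sub_left,
                        inner_op_smul_left, inner_smul_left_real, mul_sub, mul_smul_comm,
                        inner_smul_right_real, smul_sub, mul_assoc, sub_mul, smul_mul_assoc]
                      abel
            _ ≤ ‖x‖ ^ 2 • (star a * a) - ‖x‖ ^ 2 • (star a * inner A x y)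
                  - ‖x‖ ^ 2 • (inner A y x * a) + ‖x‖ ^ 2 • (‖x‖ ^ 2 • inner A y y) := by
                      gcongr
                      calc _ ≤ ‖inner A x x‖ • (star a * a) :=
                          CStarAlgebra.star_left_conjugate_le_norm_smul (hb := isSelfAdjoint_inner_self)
                        _ = ‖x‖ ^ 2 • (star a * a) := by rw [norm_sq_eq (A := A)]
    specialize h₁ (inner A x y)
    simp only [star_inner, sub_self, zero_sub, le_neg_add_iff_add_le, add_zero] at h₁
    rwa [smul_le_smul_iff_of_pos_left (pow_pos (norm_pos_iff.mpr h) _)] at h₁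

variable (E) in
lemma norm_inner_le {x y : E} : ‖inner A x y‖ ≤ ‖x‖ * ‖y‖ := by
  have := calc ‖inner A x y‖ ^ 2 = ‖inner A y x * inner A x y‖ := by
                rw [← star_inner (A := A) x y, CStarRing.norm_star_mul_self, pow_two]
    _ ≤ ‖‖x‖ ^ 2 • inner A y y‖ := by
                refine CStarAlgebra.norm_le_norm_of_nonneg_of_le ?_ inner_mul_inner_swap_le
                rw [← star_inner (A := A) x y]
                exact star_mul_self_nonneg _
    _ = ‖x‖ ^ 2 * ‖inner A y y‖ := by simp [norm_smul]
    _ = ‖x‖ ^ 2 * ‖y‖ ^ 2 := by rw [norm_sq_eq (A := A) (x := y)]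
    _ = (‖x‖ * ‖y‖) ^ 2 := by ring
  exact (pow_le_pow_iff_left₀ (norm_nonneg _) (by positivity) (by norm_num)).mp this

end CStarModuleRight

section Aux
variable {B : Type*} [NonUnitalCStarAlgebra B] [PartialOrder B] [StarOrderedRing B]
variable {E : Type*} [NormedAddCommGroup E] [NormedSpace ℂ E] [SMul Bᵐᵒᵖ E] [CStarModuleRight B E]

lemma inner_ext {u v : E} (h : ∀ w : E, (inner B w u : B) = inner B w v) : u = v := by
  have h2 : (inner B (u - v) (u - v) : B) = 0 := by
    rw [CStarModuleRight.inner_sub_right, h (u - v), sub_self]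
  exact sub_eq_zero.mp (CStarModuleRight.inner_self.mp h2)

lemma opSMul_add (x : E) (a b : B) : x <• (a + b) = x <• a + x <• b := by
  refine inner_ext (B := B) fun w => ?_
  simp only [CStarModuleRight.inner_op_smul_right, CStarModuleRight.inner_add_right, mul_add]

lemma opSMul_zero (x : E) : x <• (0 : B) = 0 := by
  refine inner_ext (B := B) fun w => ?_
  simp only [CStarModuleRight.inner_op_smul_right, mul_zero, CStarModuleRight.inner_zero_right]

lemma opSMul_csmul (x : E) (c : ℂ) (a : B) : x <• (c • a) = c • (x <• a) := by
  refine inner_ext (B := B) fun w => ?_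
  simp only [CStarModuleRight.inner_op_smul_right, CStarModuleRight.inner_smul_right_complex,
    mul_smul_comm]

lemma smul_opSMul (c : ℂ) (x : E) (a : B) : (c • x) <• a = c • (x <• a) := by
  refine inner_ext (B := B) fun w => ?_
  simp [smul_mul_assoc]

lemma add_opSMul (x y : E) (a : B) : (x + y) <• a = x <• a + y <• a := by
  refine inner_ext (B := B) fun w => ?_
  simp [add_mul]

lemma opSMul_mul (x : E) (a b : B) : x <• (a * b) = (x <• a) <• b := by
  refine inner_ext (B := B) fun w => ?_
  simp only [CStarModuleRight.inner_op_smul_right, mul_assoc]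

lemma norm_opSMul_le (x : E) (a : B) : ‖x <• a‖ ≤ ‖x‖ * ‖a‖ := by
  have h2 : ‖x <• a‖ ^ 2 ≤ (‖x‖ * ‖a‖) ^ 2 := by
    rw [CStarModuleRight.norm_sq_eq (A := B)]
    have : (inner B (x <• a) (x <• a) : B) = star a * inner B x x * a := by
      simp [mul_assoc]
    rw [this]
    calc ‖star a * (inner B x x : B) * a‖ ≤ ‖star a * (inner B x x : B)‖ * ‖a‖ := norm_mul_le _ _
      _ ≤ ‖star a‖ * ‖(inner B x x : B)‖ * ‖a‖ := by gcongr; exact norm_mul_le _ _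
      _ = ‖a‖ * ‖x‖ ^ 2 * ‖a‖ := by rw [norm_star, CStarModuleRight.norm_sq_eq (A := B)]
      _ = (‖x‖ * ‖a‖) ^ 2 := by ring
  exact (pow_le_pow_iff_left₀ (norm_nonneg _) (by positivity) (by norm_num)).mp h2

/-- `b ↦ x <• b` as a continuous linear map. -/
noncomputable def opSMulCLM (x : E) : B →L[ℂ] E :=
  LinearMap.mkContinuous
    { toFun := fun a => x <• a
      map_add' := opSMul_add x
      map_smul' := fun c a => opSMul_csmul x c a } ‖x‖
    (fun a => by simpa using norm_opSMul_le x a)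

@[simp] lemma opSMulCLM_apply (x : E) (a : B) : opSMulCLM x a = x <• a := rfl

lemma opSMul_sub (x : E) (a b : B) : x <• (a - b) = x <• a - x <• b :=
  map_sub (opSMulCLM x) a b

lemma sub_opSMul (x y : E) (a : B) : (x - y) <• a = x <• a - y <• a := by
  refine inner_ext (B := B) fun w => ?_
  simp [sub_mul]

/-- elementary bound used for the approximate unit estimate -/
lemma poly_bound {y : ℝ} (hy0 : 0 ≤ y) (hy1 : y ≤ 1) {m : ℕ} (hm : 1 ≤ m) :
    y ^ m * (1 - y) ≤ 1 / m := by
  have hm0 : (0 : ℝ) < m := by exact_mod_cast hm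
  have h1 : y ^ m ≤ Real.exp ((m : ℝ) * (y - 1)) := by
    calc y ^ m ≤ (Real.exp (y - 1)) ^ m := by
          refine pow_le_pow_left₀ hy0 ?_ m
          linarith [Real.add_one_le_exp (y - 1)]
      _ = Real.exp ((m : ℝ) * (y - 1)) := by
          rw [← Real.exp_nat_mul]
  set z : ℝ := (m : ℝ) * (1 - y) with hz
  have hz0 : 0 ≤ z := by
    have : (0:ℝ) ≤ 1 - y := by linarith
    positivity
  have h2 : y ^ m * (1 - y) ≤ Real.exp (-z) * (1 - y) := by
    have : Real.exp ((m : ℝ) * (y - 1)) = Real.exp (-z) := by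
      congr 1; rw [hz]; ring
    rw [← this]
    exact mul_le_mul_of_nonneg_right h1 (by linarith)
  have h3 : z * Real.exp (-z) ≤ 1 := by
    have hzexp : z ≤ Real.exp z := by linarith [Real.add_one_le_exp z]
    calc z * Real.exp (-z) ≤ Real.exp z * Real.exp (-z) :=
          mul_le_mul_of_nonneg_right hzexp (Real.exp_nonneg _)
      _ = 1 := by rw [← Real.exp_add]; simp
  have h4 : Real.exp (-z) * (1 - y) = (1 / m) * (z * Real.exp (-z)) := by
    rw [hz]; field_simp
  calc y ^ m * (1 - y) ≤ Real.exp (-z) * (1 - y) := h2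
    _ = (1 / m) * (z * Real.exp (-z)) := h4
    _ ≤ (1 / m) * 1 := by
        exact mul_le_mul_of_nonneg_left h3 (by positivity)
    _ = 1 / m := mul_one _

/-- bounds on the real quasispectrum of a nonneg element -/
lemma quasispectrum_bounds {a : B} (ha : 0 ≤ a) {t : ℝ} (htq : t ∈ quasispectrum ℝ a) :
    0 ≤ t ∧ t ≤ ‖a‖ := by
  refine ⟨quasispectrum_nonneg_of_nonneg a ha t htq, ?_⟩
  rw [Unitization.quasispectrum_eq_spectrum_inr' ℝ ℂ] at htq
  have := spectrum.norm_le_norm_of_mem htq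
  rw [Unitization.norm_inr] at this
  calc t ≤ |t| := le_abs_self t
    _ = ‖t‖ := (Real.norm_eq_abs t).symm
    _ ≤ ‖a‖ := this

end Aux

section Main
variable {B : Type*} [NonUnitalCStarAlgebra B] [PartialOrder B] [StarOrderedRing B]
variable {E : Type*} [NormedAddCommGroup E] [NormedSpace ℂ E] [SMul Bᵐᵒᵖ E] [CStarModuleRight B E]

/-- generators of the range ideal -/
def gens (F : Set E) : Set B := {b : B | ∃ k ∈ F, ∃ k' ∈ F, b = (inner B k k' : B)}

lemma rangeIdeal_eq (F : Set E) :
    rangeIdeal B F = closure (Submodule.span ℂ (gens (B := B) F) : Set B) := rfl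

lemma mem_rangeIdeal_of_gens {F : Set E} {b : B} (hb : b ∈ gens F) : b ∈ rangeIdeal B F :=
  subset_closure (Submodule.subset_span hb)

variable {F : Set E}

lemma span_mul_span_mem
    (ht : ∀ f ∈ F, ∀ f' ∈ F, ∀ f'' ∈ F, f <• (inner B f' f'' : B) ∈ F) :
    ∀ b ∈ Submodule.span ℂ (gens F), ∀ c ∈ Submodule.span ℂ (gens F),
      b * c ∈ Submodule.span ℂ (gens (B := B) F) := by
  intro b hb
  induction hb using Submodule.span_induction with
  | mem x hx =>
    intro c hc
    induction hc using Submodule.span_induction with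
    | mem y hy =>
      obtain ⟨k, hk, k', hk', rfl⟩ := hx
      obtain ⟨m, hm, m', hm', rfl⟩ := hy
      refine Submodule.subset_span ⟨k, hk, k' <• (inner B m m' : B), ht k' hk' m hm m' hm', ?_⟩
      rw [CStarModuleRight.inner_op_smul_right]
    | zero => simpa using Submodule.zero_mem _
    | add y z _ _ ihy ihz => simpa [mul_add] using Submodule.add_mem _ ihy ihz
    | smul c y _ ihy => simpa [mul_smul_comm] using Submodule.smul_mem _ c ihy
  | zero => intro c hc; simpa using Submodule.zero_mem _
  | add y z _ _ ihy ihz =>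
    intro c hc
    simpa [add_mul] using Submodule.add_mem _ (ihy c hc) (ihz c hc)
  | smul r y _ ihy =>
    intro c hc
    simpa [smul_mul_assoc] using Submodule.smul_mem _ r (ihy c hc)

lemma rangeIdeal_mul_mem
    (ht : ∀ f ∈ F, ∀ f' ∈ F, ∀ f'' ∈ F, f <• (inner B f' f'' : B) ∈ F)
    {b c : B} (hb : b ∈ rangeIdeal B F) (hc : c ∈ rangeIdeal B F) :
    b * c ∈ rangeIdeal B F := by
  rw [rangeIdeal_eq] at hb hc ⊢
  have step1 : ∀ c' ∈ Submodule.span ℂ (gens (B := B) F),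
      b * c' ∈ closure (Submodule.span ℂ (gens (B := B) F) : Set B) := by
    intro c' hc'
    have h1 : Set.MapsTo (fun y => y * c') (Submodule.span ℂ (gens (B := B) F) : Set B)
        (Submodule.span ℂ (gens (B := B) F) : Set B) :=
      fun b' hb' => span_mul_span_mem ht b' hb' c' hc'
    simpa using
      map_mem_closure (f := fun y => y * c') (continuous_mul_right c') hb
        (fun b' hb' => subset_closure (h1 hb'))
  have h2 := map_mem_closure (f := fun y => b * y) (continuous_mul_left b) hc
    (fun c' hc' => step1 c' hc')
  simpa [closure_closure] using h2

lemma rangeIdeal_isClosed : IsClosed (rangeIdeal B F) := isClosed_closure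

lemma rangeIdeal_zero_mem : (0 : B) ∈ rangeIdeal B F :=
  subset_closure (Submodule.zero_mem _)

lemma rangeIdeal_add_mem {b c : B} (hb : b ∈ rangeIdeal B F) (hc : c ∈ rangeIdeal B F) :
    b + c ∈ rangeIdeal B F :=
  (Submodule.span ℂ (gens (B := B) F)).topologicalClosure.add_mem hb hc

lemma rangeIdeal_smul_mem (r : ℂ) {b : B} (hb : b ∈ rangeIdeal B F) :
    r • b ∈ rangeIdeal B F :=
  (Submodule.span ℂ (gens (B := B) F)).topologicalClosure.smul_mem r hb

lemma rangeIdeal_rsmul_mem (r : ℝ) {b : B} (hb : b ∈ rangeIdeal B F) :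
    r • b ∈ rangeIdeal B F := by
  have : r • b = (r : ℂ) • b := by
    rw [← algebraMap_smul ℂ r b, Complex.coe_algebraMap]
  rw [this]
  exact rangeIdeal_smul_mem _ hb

lemma rangeIdeal_sub_mem {b c : B} (hb : b ∈ rangeIdeal B F) (hc : c ∈ rangeIdeal B F) :
    b - c ∈ rangeIdeal B F :=
  (Submodule.span ℂ (gens (B := B) F)).topologicalClosure.sub_mem hb hc

/-- Lemma A : `F <• B_F ⊆ F`. -/
lemma opSMul_mem_of_mem_rangeIdeal (hcl : IsClosed F) (hsub : IsLinearSubspace F)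
    (ht : ∀ f ∈ F, ∀ f' ∈ F, ∀ f'' ∈ F, f <• (inner B f' f'' : B) ∈ F)
    {f : E} (hf : f ∈ F) {b : B} (hb : b ∈ rangeIdeal B F) : f <• b ∈ F := by
  have hsubset : (Submodule.span ℂ (gens (B := B) F) : Set B) ⊆ (opSMulCLM f) ⁻¹' F := by
    intro b hb
    induction hb using Submodule.span_induction with
    | mem x hx =>
      obtain ⟨k, hk, k', hk', rfl⟩ := hx
      show f <• (inner B k k' : B) ∈ F
      exact ht f hf k hk k' hk'
    | zero =>
      show f <• (0 : B) ∈ F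
      rw [opSMul_zero]; exact hsub.1
    | add y z _ _ ihy ihz =>
      show f <• (y + z) ∈ F
      rw [opSMul_add]
      exact hsub.2.1 _ ihy _ ihz
    | smul c y _ ihy =>
      show f <• (c • y) ∈ F
      rw [opSMul_csmul]
      exact hsub.2.2 c _ ihy
  exact closure_minimal hsubset (hcl.preimage (opSMulCLM f).continuous) hb


/-- Key approximate-unit lemma: every `f ∈ F` is approximately `f <• u` with `u ∈ B_F`. -/
lemma exists_approx
    (ht : ∀ f ∈ F, ∀ f' ∈ F, ∀ f'' ∈ F, f <• (inner B f' f'' : B) ∈ F)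
    {f : E} (hf : f ∈ F) {δ : ℝ} (hδ : 0 < δ) :
    ∃ u ∈ rangeIdeal B F, ‖f <• u - f‖ < δ := by
  set a : B := (inner B f f : B) with ha_def
  have haF : a ∈ rangeIdeal B F := mem_rangeIdeal_of_gens ⟨f, hf, f, hf, rfl⟩
  have hasa : IsSelfAdjoint a := CStarModuleRight.isSelfAdjoint_inner_self
  have ha0 : (0 : B) ≤ a := CStarModuleRight.inner_self_nonneg
  set s : ℝ := ‖a‖ + 1 with hs_def
  have hs : 0 < s := by positivity
  have hs' : ‖a‖ < s := by simp [hs_def]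
  set p : ℕ → ℝ → ℝ := fun n t => 1 - (1 - t / s) ^ n with hp
  have hpcont : ∀ n, Continuous (p n) := by
    intro n; simp only [hp]; fun_prop
  have hp0 : ∀ n, p n 0 = 0 := by intro n; simp [hp]
  set u : ℕ → B := fun n => cfcₙ (p n) a with hu
  have husa : ∀ n, IsSelfAdjoint (u n) := fun n => cfcₙ_predicate (p n) a
  -- membership of the approximate units in the range ideal
  have humem : ∀ n, u n ∈ rangeIdeal B F := by
    intro n
    induction n with
    | zero =>
      have h0 : p 0 = fun _ : ℝ => (0 : ℝ) := by funext t; simp [hp]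
      show cfcₙ (p 0) a ∈ _
      rw [h0, cfcₙ_const_zero ℝ a]
      exact rangeIdeal_zero_mem
    | succ n ih =>
      have hrec : p (n + 1) = fun t => p n t + s⁻¹ * (t - t * p n t) := by
        funext t
        simp only [hp]
        rw [pow_succ]
        field_simp
        ring
      have hcalc : u (n + 1) = u n + s⁻¹ • (a - a * u n) := by
        show cfcₙ (p (n + 1)) a = _
        rw [hrec,
          cfcₙ_add (p n) (fun t => s⁻¹ * (t - t * p n t)) a
            (hpcont n).continuousOn (hp0 n)
            (by exact (continuous_const.mul (continuous_id.sub
              (continuous_id.mul (hpcont n)))).continuousOn)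
            (by simp [hp0 n]),
          cfcₙ_const_mul s⁻¹ (fun t => t - t * p n t) a
            (by exact (continuous_id.sub (continuous_id.mul (hpcont n))).continuousOn)
            (by simp [hp0 n]),
          cfcₙ_sub (fun t => t) (fun t => t * p n t) a
            continuous_id.continuousOn (by simp)
            (by exact (continuous_id.mul (hpcont n)).continuousOn) (by simp [hp0 n]),
          cfcₙ_mul (fun t => t) (p n) a
            continuous_id.continuousOn (by simp)
            (hpcont n).continuousOn (hp0 n),
          cfcₙ_id' ℝ a]
      rw [hcalc]
      exact rangeIdeal_add_mem ih
        (rangeIdeal_rsmul_mem _ (rangeIdeal_sub_mem haF (rangeIdeal_mul_mem ht haF ih)))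
  -- the norm estimate
  have hbound : ∀ n, 1 ≤ n → ‖f <• u n - f‖ ^ 2 ≤ s * (1 / (2 * n)) := by
    intro n hn
    have hX : (inner B (f <• u n - f) (f <• u n - f) : B)
        = u n * (a * u n) - u n * a - (a * u n - a) := by
      simp only [CStarModuleRight.inner_sub_left, CStarModuleRight.inner_sub_right,
        CStarModuleRight.inner_op_smul_left, CStarModuleRight.inner_op_smul_right]
      rw [(husa n).star_eq, ← ha_def]
      noncomm_ring
    have e1 : cfcₙ (fun t => t * p n t) a = a * u n := by
      rw [cfcₙ_mul (fun t => t) (p n) a continuous_id.continuousOn (by simp)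
        (hpcont n).continuousOn (hp0 n), cfcₙ_id' ℝ a]
    have e2 : cfcₙ (fun t => p n t * t) a = u n * a := by
      rw [cfcₙ_mul (p n) (fun t => t) a (hpcont n).continuousOn (hp0 n)
        continuous_id.continuousOn (by simp), cfcₙ_id' ℝ a]
    have e3 : cfcₙ (fun t => p n t * (t * p n t)) a = u n * (a * u n) := by
      rw [cfcₙ_mul (p n) (fun t => t * p n t) a (hpcont n).continuousOn (hp0 n)
        (by exact (continuous_id.mul (hpcont n)).continuousOn) (by simp [hp0 n]), e1]
    have e5 : cfcₙ (fun t => t * p n t - t) a = a * u n - a := by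
      rw [cfcₙ_sub (fun t => t * p n t) (fun t => t) a
        (by exact (continuous_id.mul (hpcont n)).continuousOn) (by simp [hp0 n])
        continuous_id.continuousOn (by simp), e1, cfcₙ_id' ℝ a]
    have e4 : cfcₙ (fun t => p n t * (t * p n t) - p n t * t) a
        = u n * (a * u n) - u n * a := by
      rw [cfcₙ_sub (fun t => p n t * (t * p n t)) (fun t => p n t * t) a
        (by exact ((hpcont n).mul (continuous_id.mul (hpcont n))).continuousOn)
        (by simp [hp0 n])
        (by exact ((hpcont n).mul continuous_id).continuousOn) (by simp [hp0 n]), e3, e2]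
    have e6 : cfcₙ (fun t => (p n t * (t * p n t) - p n t * t) - (t * p n t - t)) a
        = u n * (a * u n) - u n * a - (a * u n - a) := by
      rw [cfcₙ_sub (fun t => p n t * (t * p n t) - p n t * t) (fun t => t * p n t - t) a
        (by exact (((hpcont n).mul (continuous_id.mul (hpcont n))).sub
          ((hpcont n).mul continuous_id)).continuousOn)
        (by simp [hp0 n])
        (by exact ((continuous_id.mul (hpcont n)).sub continuous_id).continuousOn)
        (by simp [hp0 n]), e4, e5]
    have hsup : ∀ t ∈ quasispectrum ℝ a,
        ‖(p n t * (t * p n t) - p n t * t) - (t * p n t - t)‖ ≤ s * (1 / (2 * n)) := by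
      intro t htq
      obtain ⟨h0t, hta⟩ := quasispectrum_bounds ha0 htq
      have hts : t ≤ s := hta.trans hs'.le
      set y : ℝ := 1 - t / s with hy_def
      have hy0 : 0 ≤ y := by
        have : t / s ≤ 1 := (div_le_one hs).mpr hts
        simp only [hy_def]; linarith
      have hy1 : y ≤ 1 := by
        have : 0 ≤ t / s := div_nonneg h0t hs.le
        simp only [hy_def]; linarith
      have hpt : p n t = 1 - y ^ n := by simp [hp, hy_def]
      have hts' : t = s * (1 - y) := by
        simp only [hy_def]
        field_simp
        ring
      have hqt : (p n t * (t * p n t) - p n t * t) - (t * p n t - t) = t * (y ^ n) ^ 2 := by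
        rw [hpt]; ring
      rw [hqt, Real.norm_eq_abs, abs_of_nonneg (by positivity)]
      have h2n : (y ^ n) ^ 2 = y ^ (2 * n) := by
        rw [pow_mul']
      calc t * (y ^ n) ^ 2 = s * (y ^ (2 * n) * (1 - y)) := by rw [h2n, hts']; ring
        _ ≤ s * (1 / (2 * n)) := by
            have hb := poly_bound hy0 hy1 (m := 2 * n) (by omega)
            have : ((2 * n : ℕ) : ℝ) = 2 * (n : ℝ) := by push_cast; ring
            rw [this] at hb
            exact mul_le_mul_of_nonneg_left hb hs.le
    calc ‖f <• u n - f‖ ^ 2 = ‖(inner B (f <• u n - f) (f <• u n - f) : B)‖ :=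
          (CStarModuleRight.norm_sq_eq (A := B))
      _ = ‖cfcₙ (fun t => (p n t * (t * p n t) - p n t * t) - (t * p n t - t)) a‖ := by
          rw [hX, ← e6]
      _ ≤ s * (1 / (2 * n)) := norm_cfcₙ_le hsup
  -- choose `n` large enough
  obtain ⟨n, hn⟩ := exists_nat_gt (s / (2 * δ ^ 2))
  have hnpos : 0 < (n : ℝ) := lt_of_le_of_lt (by positivity) hn
  have hn0 : n ≠ 0 := by rintro rfl; simp at hnpos
  have hn1 : 1 ≤ n := Nat.one_le_iff_ne_zero.mpr hn0
  have hlt : s * (1 / (2 * n)) < δ ^ 2 := by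
    rw [div_lt_iff₀ (by positivity)] at hn
    rw [mul_one_div, div_lt_iff₀ (by positivity)]
    nlinarith
  refine ⟨u n, humem n, ?_⟩
  have h2 : ‖f <• u n - f‖ ^ 2 < δ ^ 2 := lt_of_le_of_lt (hbound n hn1) hlt
  exact lt_of_pow_lt_pow_left₀ 2 hδ.le h2

end Main

/-- if `B_F` is hereditary in `B_E` (`B_F · B_E · B_F ⊆ B_F`), then the
closed ternary subspace `F` is ternary hereditary in `E`: `F⟨E,F⟩ ⊆ F`. -/
theorem ternary_hereditary_of_hereditary_rangeIdeal
    {B : Type*} [NonUnitalCStarAlgebra B] [PartialOrder B] [StarOrderedRing B]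
    {E : Type*} [NormedAddCommGroup E] [NormedSpace ℂ E] [SMul Bᵐᵒᵖ E]
    [CStarModuleRight B E] [CompleteSpace E] (F : Set E) (hcl : IsClosed F) (hsub : IsLinearSubspace F)
    (ht : ∀ f ∈ F, ∀ f' ∈ F, ∀ f'' ∈ F, f <• (inner B f' f'' : B) ∈ F)
    (hher : ∀ a ∈ rangeIdeal B F, ∀ b ∈ rangeIdeal B (Set.univ : Set E),
      ∀ a' ∈ rangeIdeal B F, a * b * a' ∈ rangeIdeal B F) :
    ∀ f ∈ F, ∀ f' ∈ F, ∀ x : E, f <• (inner B x f' : B) ∈ F := by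
  intro f hf f' hf' x
  set c : B := (inner B x f' : B) with hc_def
  have hcE : c ∈ rangeIdeal B (Set.univ : Set E) :=
    subset_closure (Submodule.subset_span ⟨x, trivial, f', trivial, rfl⟩)
  rw [← hcl.closure_eq, Metric.mem_closure_iff]
  intro ε hε
  obtain ⟨u, huI, hu⟩ := exists_approx ht hf
    (show (0:ℝ) < (ε / 2) / (‖c‖ + 1) by positivity)
  set C : ℝ := ‖f‖ * ‖u‖ * ‖x‖ + 1 with hC_def
  have hC : 0 < C := by positivity
  obtain ⟨v, hvI, hv⟩ := exists_approx ht hf' (show (0:ℝ) < (ε / 2) / C by positivity)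
  refine ⟨f <• (u * c * v),
    opSMul_mem_of_mem_rangeIdeal hcl hsub ht hf (hher u huI c hcE v hvI), ?_⟩
  rw [dist_eq_norm]
  have key1 : ‖f <• c - f <• (u * c)‖ < ε / 2 := by
    have h1 : f <• c - f <• (u * c) = (f - f <• u) <• c := by
      rw [sub_opSMul, opSMul_mul]
    rw [h1]
    calc ‖(f - f <• u) <• c‖ ≤ ‖f - f <• u‖ * ‖c‖ := norm_opSMul_le _ _
      _ = ‖f <• u - f‖ * ‖c‖ := by rw [norm_sub_rev]
      _ ≤ ‖f <• u - f‖ * (‖c‖ + 1) := by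
          have := norm_nonneg (f <• u - f); nlinarith [norm_nonneg c]
      _ < ((ε / 2) / (‖c‖ + 1)) * (‖c‖ + 1) := by
          have hpos : (0:ℝ) < ‖c‖ + 1 := by positivity
          exact mul_lt_mul_of_pos_right hu hpos
      _ = ε / 2 := by
          field_simp
  have key2 : ‖f <• (u * c) - f <• (u * c * v)‖ < ε / 2 := by
    have h1 : f <• (u * c) - f <• (u * c * v)
        = f <• (u * (inner B x (f' - f' <• v) : B)) := by
      rw [← opSMul_sub]
      congr 1
      rw [CStarModuleRight.inner_sub_right, CStarModuleRight.inner_op_smul_right, ← hc_def]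
      noncomm_ring
    rw [h1]
    have hcoef : ‖f‖ * ‖u‖ * ‖x‖ < C := by rw [hC_def]; linarith
    calc ‖f <• (u * (inner B x (f' - f' <• v) : B))‖
        ≤ ‖f‖ * ‖u * (inner B x (f' - f' <• v) : B)‖ := norm_opSMul_le _ _
      _ ≤ ‖f‖ * (‖u‖ * ‖(inner B x (f' - f' <• v) : B)‖) := by
          gcongr
          exact norm_mul_le _ _
      _ ≤ ‖f‖ * (‖u‖ * (‖x‖ * ‖f' - f' <• v‖)) := by
          gcongr
          exact CStarModuleRight.norm_inner_le (A := B) E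
      _ = (‖f‖ * ‖u‖ * ‖x‖) * ‖f' <• v - f'‖ := by rw [norm_sub_rev]; ring
      _ ≤ (‖f‖ * ‖u‖ * ‖x‖) * ((ε / 2) / C) := by
          have : (0:ℝ) ≤ ‖f‖ * ‖u‖ * ‖x‖ := by positivity
          exact mul_le_mul_of_nonneg_left hv.le this
      _ < C * ((ε / 2) / C) := by
          have : (0:ℝ) < (ε / 2) / C := by positivity
          exact mul_lt_mul_of_pos_right hcoef this
      _ = ε / 2 := by field_simp
  have htri := dist_triangle (f <• c) (f <• (u * c)) (f <• (u * c * v))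
  rw [dist_eq_norm, dist_eq_norm, dist_eq_norm] at htri
  linarith
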